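/- Let C ⊆ ℝⁿ be a nonempty convex set, let K be an exposed face of C, and suppose x ∈ ri(K), the relative interior of K. Then the minimal exposed face of C containing x equals K. -/

import Mathlib

lemma aux_key {n : ℕ} {K : Set (EuclideanSpace ℝ (Fin n))}
    {x y : EuclideanSpace ℝ (Fin n)} (hx : x ∈ intrinsicInterior ℝ K)
    (hy : y ∈ K) (hxy : y ≠ x) : ∃ z ∈ K, x ∈ openSegment ℝ y z := by
  obtain ⟨x', hx', hx'x⟩ := (mem_intrinsicInterior).1 hx
  -- open set in subtype
  obtain ⟨U, hUopen, hU⟩ := isOpen_induced_iff.1 (isOpen_interior (s := ((↑) ⁻¹' K : Set <| affineSpan ℝ K)))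
  have hxU : x ∈ U := by
    have : (x' : EuclideanSpace ℝ (Fin n)) ∈ U := by
      have := hx'
      rw [← hU] at this
      exact this
    rwa [hx'x] at this
  obtain ⟨ε, hε, hball⟩ := Metric.isOpen_iff.1 hUopen x hxU
  have hxyne : ‖x - y‖ ≠ 0 := by
    simpa [sub_eq_zero] using fun h => hxy h.symm
  have hxy0 : 0 < ‖x - y‖ := lt_of_le_of_ne (norm_nonneg _) (Ne.symm hxyne)
  set t : ℝ := ε / (2 * ‖x - y‖) with ht
  have ht0 : 0 < t := div_pos hε (by positivity)
  set z : EuclideanSpace ℝ (Fin n) := x + t • (x - y) with hz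
  have hzU : z ∈ U := by
    apply hball
    simp only [Metric.mem_ball, dist_eq_norm, hz]
    have : x + t • (x - y) - x = t • (x - y) := by abel
    rw [this, norm_smul, Real.norm_eq_abs, abs_of_pos ht0, ht]
    rw [div_mul_eq_mul_div, mul_comm (2 : ℝ)]
    rw [div_lt_iff₀ (by positivity)]
    nlinarith
  have hxspan : x ∈ affineSpan ℝ K := subset_affineSpan ℝ K (intrinsicInterior_subset hx)
  have hyspan : y ∈ affineSpan ℝ K := subset_affineSpan ℝ K hy
  have hzspan : z ∈ affineSpan ℝ K := by
    have := AffineSubspace.smul_vsub_vadd_mem (affineSpan ℝ K) t hxspan hyspan hxspan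
    simpa [hz, vsub_eq_sub, vadd_eq_add, add_comm] using this
  have hzK : z ∈ K := by
    have h : (⟨z, hzspan⟩ : affineSpan ℝ K) ∈ interior ((↑) ⁻¹' K : Set <| affineSpan ℝ K) := by
      rw [← hU]; exact hzU
    have h2 := interior_subset h
    exact h2
  refine ⟨z, hzK, ?_⟩
  rw [hz]
  clear hzK hzspan hzU
  clear_value z
  clear hz ht hball
  clear_value t
  have h1t : (0 : ℝ) < 1 + t := by linarith
  refine ⟨t / (1 + t), 1 / (1 + t), by positivity, by positivity, ?_, ?_⟩
  · field_simp; ring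
  · match_scalars <;> field_simp <;> ring

/-- if `K` is an exposed face of the nonempty convex set `C` and
`x` lies in the relative (intrinsic) interior of `K`, then the minimal exposed face of `C`
containing `x` (the intersection of all exposed faces of `C` containing `x`) equals `K`. -/
theorem stmt7 {n : ℕ} (C K : Set (EuclideanSpace ℝ (Fin n)))
    (hCne : C.Nonempty) (hCcv : Convex ℝ C)
    (hK : IsExposed ℝ C K) (x : EuclideanSpace ℝ (Fin n))
    (hx : x ∈ intrinsicInterior ℝ K) :
    ⋂₀ {F | IsExposed ℝ C F ∧ x ∈ F} = K := by
  have hxK : x ∈ K := intrinsicInterior_subset hx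
  apply subset_antisymm
  · exact Set.sInter_subset_of_mem ⟨hK, hxK⟩
  · intro y hy
    rw [Set.mem_sInter]
    rintro F ⟨hF, hxF⟩
    by_cases hyx : y = x
    · rwa [hyx]
    obtain ⟨z, hzK, hseg⟩ := aux_key hx hy hyx
    exact hF.isExtreme.2 (hK.subset hy) (hK.subset hzK) hxF hseg
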